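/- Let W₆' be the Weyl group of type D₆ realized as signed 6×6 permutation matrices with an even number of sign changes, and π : W₆' → S₆ the projection onto the permutation part. If H is a normal subgroup of W₆' with π(H) = S₆, then H = W₆'. -/

import Mathlib

noncomputable section
open Matrix Complex

/-- The signed permutation matrix with underlying permutation `σ` and signs `a`. -/
def sp (σ : Equiv.Perm (Fin 6)) (a : Fin 6 → ℂ) : Matrix (Fin 6) (Fin 6) ℂ :=
  Matrix.of fun i j => if i = σ j then a j else 0

/-- All entries are `±1`. -/
def signs (a : Fin 6 → ℂ) : Prop := ∀ k, a k = 1 ∨ a k = -1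

/-- The Weyl group of type `B₆`: all signed permutation matrices. -/
def W6Set : Set (GL (Fin 6) ℂ) :=
  {g | ∃ σ a, signs a ∧ (g : Matrix (Fin 6) (Fin 6) ℂ) = sp σ a}

/-- `W₆⁺`: signed permutation matrices of determinant 1. -/
def W6plusSet : Set (GL (Fin 6) ℂ) :=
  {g | ∃ σ a, signs a ∧ (g : Matrix (Fin 6) (Fin 6) ℂ) = sp σ a ∧
    (g : Matrix (Fin 6) (Fin 6) ℂ).det = 1}

/-- `W₆'` (type `D₆`): signed permutation matrices with product of entries 1. -/
def W6'Set : Set (GL (Fin 6) ℂ) :=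
  {g | ∃ σ a, signs a ∧ (∏ k, a k) = 1 ∧ (g : Matrix (Fin 6) (Fin 6) ℂ) = sp σ a}

/-- `A₆'`: diagonal sign matrices with product of entries 1. -/
def A6'Set : Set (GL (Fin 6) ℂ) :=
  {g | ∃ a, signs a ∧ (∏ k, a k) = 1 ∧ (g : Matrix (Fin 6) (Fin 6) ℂ) = Matrix.diagonal a}

/-- `i · Id` as an element of `GL₆(ℂ)`. -/
def iId : GL (Fin 6) ℂ :=
  ⟨Matrix.diagonal (fun _ => Complex.I), Matrix.diagonal (fun _ => -Complex.I),
    by simp [Matrix.diagonal_mul_diagonal, Complex.I_mul_I],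
    by simp [Matrix.diagonal_mul_diagonal, Complex.I_mul_I]⟩

/-- For a monomial matrix, the product of its nonzero entries (γ). -/
def gam (m : Matrix (Fin 6) (Fin 6) ℂ) : ℂ := ∏ j, ∑ i, m i j

/-- `𝒲₆ = ⟨W₆⁺, i·Id⟩`. -/
def CW6Sub : Subgroup (GL (Fin 6) ℂ) := Subgroup.closure (W6plusSet ∪ {iId})

/-- `𝒲₆' = 𝒲₆ ∩ ker γ`. -/
def CW6'Set : Set (GL (Fin 6) ℂ) :=
  {g | g ∈ CW6Sub ∧ gam (g : Matrix (Fin 6) (Fin 6) ℂ) = 1}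

def CW6'Sub : Subgroup (GL (Fin 6) ℂ) := Subgroup.closure CW6'Set

def W6Sub : Subgroup (GL (Fin 6) ℂ) := Subgroup.closure W6Set
def W6plusSub : Subgroup (GL (Fin 6) ℂ) := Subgroup.closure W6plusSet
def W6'Sub : Subgroup (GL (Fin 6) ℂ) := Subgroup.closure W6'Set

lemma signs_sq {a : Fin 6 → ℂ} (ha : signs a) (k : Fin 6) : a k * a k = 1 := by
  rcases ha k with h | h <;> rw [h] <;> ring

lemma signs_ne_zero {a : Fin 6 → ℂ} (ha : signs a) (k : Fin 6) : a k ≠ 0 := by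
  rcases ha k with h | h <;> rw [h] <;> norm_num

lemma sp_mul (σ τ : Equiv.Perm (Fin 6)) (a b : Fin 6 → ℂ) :
    sp σ a * sp τ b = sp (σ * τ) (fun j => a (τ j) * b j) := by
  ext i j
  simp only [sp, Matrix.mul_apply, Matrix.of_apply]
  rw [Finset.sum_eq_single (τ j)]
  · simp only [if_pos rfl, Equiv.Perm.mul_apply]
    split_ifs <;> simp_all [mul_comm]
  · intro k _ hk
    rw [if_neg hk, mul_zero]
  · intro h; exact absurd (Finset.mem_univ _) h

lemma sp_one_one : sp 1 (fun _ => (1:ℂ)) = 1 := by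
  ext i j
  by_cases h : i = j <;> simp [sp, Matrix.one_apply, h]

lemma diagonal_eq_sp (a : Fin 6 → ℂ) : Matrix.diagonal a = sp 1 a := by
  ext i j
  simp only [sp, Matrix.diagonal_apply, Matrix.of_apply, Equiv.Perm.one_apply]
  by_cases h1 : i = j <;> simp [h1]

lemma sp_inj {σ τ : Equiv.Perm (Fin 6)} {a b : Fin 6 → ℂ} (hb : ∀ k, b k ≠ 0)
    (h : sp σ a = sp τ b) : σ = τ ∧ a = b := by
  have key : ∀ k, σ k = τ k ∧ a k = b k := by
    intro k
    have := congrFun (congrFun h (τ k)) k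
    simp only [sp, Matrix.of_apply, if_pos rfl] at this
    split_ifs at this with he
    · exact ⟨he.symm, this⟩
    · exact absurd this.symm (hb k)
  exact ⟨Equiv.ext fun k => (key k).1, funext fun k => (key k).2⟩

lemma sp_mul_inv {σ : Equiv.Perm (Fin 6)} {a : Fin 6 → ℂ} (ha : signs a) :
    sp σ a * sp σ⁻¹ (fun j => a (σ⁻¹ j)) = 1 := by
  rw [sp_mul, mul_inv_cancel]
  have : (fun j => a (σ⁻¹ j) * a (σ⁻¹ j)) = fun _ => (1:ℂ) := funext fun j => signs_sq ha _
  rw [this, sp_one_one]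

lemma sp_inv_mul {σ : Equiv.Perm (Fin 6)} {a : Fin 6 → ℂ} (ha : signs a) :
    sp σ⁻¹ (fun j => a (σ⁻¹ j)) * sp σ a = 1 := by
  rw [sp_mul, inv_mul_cancel]
  have : (fun j => a (σ⁻¹ (σ j)) * a j) = fun _ => (1:ℂ) := by
    funext j; rw [show σ⁻¹ (σ j) = j from σ.symm_apply_apply j]; exact signs_sq ha j
  rw [this, sp_one_one]

lemma coe_inv_sp (g : GL (Fin 6) ℂ) (σ : Equiv.Perm (Fin 6)) (a : Fin 6 → ℂ) (ha : signs a)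
    (hg : (g : Matrix (Fin 6) (Fin 6) ℂ) = sp σ a) :
    ((g⁻¹ : GL (Fin 6) ℂ) : Matrix (Fin 6) (Fin 6) ℂ) = sp σ⁻¹ (fun j => a (σ⁻¹ j)) := by
  have h1 : (g : Matrix (Fin 6) (Fin 6) ℂ) * sp σ⁻¹ (fun j => a (σ⁻¹ j)) = 1 := by
    rw [hg]; exact sp_mul_inv ha
  calc ((g⁻¹ : GL (Fin 6) ℂ) : Matrix (Fin 6) (Fin 6) ℂ)
      = ↑g⁻¹ * ((g : Matrix (Fin 6) (Fin 6) ℂ) * sp σ⁻¹ (fun j => a (σ⁻¹ j))) := by rw [h1, mul_one]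
    _ = (↑g⁻¹ * (g : Matrix (Fin 6) (Fin 6) ℂ)) * sp σ⁻¹ (fun j => a (σ⁻¹ j)) := by rw [mul_assoc]
    _ = sp σ⁻¹ (fun j => a (σ⁻¹ j)) := by
        rw [← Units.val_mul, inv_mul_cancel, Units.val_one, one_mul]
def W6'Grp : Subgroup (GL (Fin 6) ℂ) where
  carrier := W6'Set
  one_mem' := ⟨1, fun _ => 1, fun _ => Or.inl rfl, by simp, by rw [Units.val_one, sp_one_one]⟩
  mul_mem' := by
    rintro g h ⟨σ, a, ha, hpa, hga⟩ ⟨τ, b, hb, hpb, hhb⟩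
    refine ⟨σ * τ, fun j => a (τ j) * b j, ?_, ?_, ?_⟩
    · intro k
      rcases ha (τ k) with h1 | h1 <;> rcases hb k with h2 | h2 <;>
        simp [h1, h2]
    · rw [Finset.prod_mul_distrib, Equiv.prod_comp τ a, hpa, hpb, one_mul]
    · rw [Units.val_mul, hga, hhb, sp_mul]
  inv_mem' := by
    rintro g ⟨σ, a, ha, hpa, hga⟩
    refine ⟨σ⁻¹, fun j => a (σ⁻¹ j), fun k => ha _, ?_, coe_inv_sp g σ a ha hga⟩
    rw [Equiv.prod_comp σ⁻¹ a, hpa]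

lemma W6'Sub_eq : W6'Sub = W6'Grp := Subgroup.closure_eq W6'Grp

lemma mem_W6'Sub_iff (g : GL (Fin 6) ℂ) : g ∈ W6'Sub ↔ g ∈ W6'Set := by
  rw [W6'Sub_eq]; rfl
def flp (j k : Fin 6) : Fin 6 → ℂ := fun m => if m = j ∨ m = k then -1 else 1

lemma flp_signs (j k : Fin 6) : signs (flp j k) := by
  intro m; unfold flp; split_ifs <;> simp

lemma flp_split {j k : Fin 6} (hjk : j ≠ k) :
    flp j k = fun m => (if m = j then (-1:ℂ) else 1) * (if m = k then -1 else 1) := by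
  funext m
  unfold flp
  rcases eq_or_ne m j with rfl | h1 <;> rcases eq_or_ne m k with rfl | h2 <;>
    simp_all

lemma flp_prod {j k : Fin 6} (hjk : j ≠ k) : ∏ m, flp j k m = 1 := by
  rw [flp_split hjk, Finset.prod_mul_distrib,
    Finset.prod_ite_eq' Finset.univ j (fun _ => (-1:ℂ)),
    Finset.prod_ite_eq' Finset.univ k (fun _ => (-1:ℂ))]
  simp

def mkSP (σ : Equiv.Perm (Fin 6)) (a : Fin 6 → ℂ) (ha : signs a) : GL (Fin 6) ℂ :=
  ⟨sp σ a, sp σ⁻¹ (fun j => a (σ⁻¹ j)), sp_mul_inv ha, sp_inv_mul ha⟩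

lemma flp_mem (H : Subgroup (GL (Fin 6) ℂ)) (hle : H ≤ W6'Sub)
    (hnorm : ∀ g ∈ W6'Sub, ∀ h ∈ H, g * h * g⁻¹ ∈ H)
    (hsurj : ∀ σ : Equiv.Perm (Fin 6), ∃ h ∈ H, ∃ a : Fin 6 → ℂ,
      (h : Matrix (Fin 6) (Fin 6) ℂ) = sp σ a)
    (j k : Fin 6) (hjk : j ≠ k) :
    ∃ d ∈ H, (d : Matrix (Fin 6) (Fin 6) ℂ) = Matrix.diagonal (flp j k) := by
  have hex : ∀ j k : Fin 6, ∃ l : Fin 6, l ≠ j ∧ l ≠ k := by decide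
  obtain ⟨l, hlj, hlk⟩ := hex j k
  set τ := Equiv.swap j k with hτ
  set c := flp j l with hc
  have hcs : signs c := flp_signs j l
  set g := mkSP 1 c hcs with hg
  have hgcoe : (g : Matrix (Fin 6) (Fin 6) ℂ) = sp 1 c := rfl
  have hgW : g ∈ W6'Sub := (mem_W6'Sub_iff g).mpr ⟨1, c, hcs, flp_prod (Ne.symm hlj), hgcoe⟩
  obtain ⟨h, hH, b', hhb'⟩ := hsurj τ
  obtain ⟨σ', b, hbs, hpb, hhb⟩ := (mem_W6'Sub_iff h).mp (hle hH)
  obtain ⟨hστ, hbb⟩ := sp_inj (signs_ne_zero hbs) (hhb'.symm.trans hhb)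
  rw [← hστ] at hhb
  refine ⟨g * h * g⁻¹ * h⁻¹, ?_, ?_⟩
  · exact H.mul_mem (hnorm g hgW h hH) (H.inv_mem hH)
  · have hginv : ((g⁻¹ : GL (Fin 6) ℂ) : Matrix (Fin 6) (Fin 6) ℂ) = sp 1 c := by
      rw [coe_inv_sp g 1 c hcs hgcoe, inv_one]
      simp [Equiv.Perm.one_apply]
    have hhinv : ((h⁻¹ : GL (Fin 6) ℂ) : Matrix (Fin 6) (Fin 6) ℂ)
        = sp τ⁻¹ (fun m => b (τ⁻¹ m)) := coe_inv_sp h τ b hbs hhb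
    rw [Units.val_mul, Units.val_mul, Units.val_mul, hgcoe, hginv, hhinv, hhb,
      sp_mul, sp_mul, sp_mul]
    rw [diagonal_eq_sp]
    have hperm : (1 : Equiv.Perm (Fin 6)) * τ * 1 * τ⁻¹ = 1 := by group
    rw [hperm]
    refine congrArg (sp 1) (funext fun m => ?_)
    have hb2 : ∀ x, b x * b x = 1 := signs_sq hbs
    have hc2 : ∀ x, c x * c x = 1 := signs_sq hcs
    have hkj : k ≠ j := hjk.symm
    have hkl : k ≠ l := fun h' => hlk h'.symm
    have hjl : j ≠ l := fun h' => hlj h'.symm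
    simp only [Equiv.Perm.one_apply, (fun (e : Equiv.Perm (Fin 6)) x => show e (e⁻¹ x) = x from e.apply_symm_apply x), Equiv.swap_inv,
      Equiv.swap_apply_self, hτ]
    rcases eq_or_ne m j with rfl | h1
    · rw [Equiv.swap_apply_left]
      have e1 : c m = -1 := by simp [hc, flp]
      have e2 : c k = 1 := by simp [hc, flp, hkj, hkl]
      have e3 : flp m k m = -1 := by simp [flp]
      rw [e1, e2, e3]
      linear_combination -hb2 k
    rcases eq_or_ne m k with rfl | h2
    · rw [Equiv.swap_apply_right]
      have e1 : c m = 1 := by simp [hc, flp, hkj, hkl]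
      have e2 : c j = -1 := by simp [hc, flp]
      have e3 : flp j m m = -1 := by simp [flp]
      rw [e1, e2, e3]
      linear_combination -hb2 j
    · rw [Equiv.swap_apply_of_ne_of_ne h1 h2]
      have e3 : flp j k m = 1 := by simp [flp, h1, h2]
      rw [e3]
      linear_combination (c m * c m) * hb2 m + hc2 m
lemma prod_signs_eq (c : Fin 6 → ℂ) (hc : signs c) :
    ∏ m, c m = (-1:ℂ) ^ (Finset.univ.filter (fun m => c m = -1)).card := by
  classical
  have h1 : ∀ m, c m = if m ∈ Finset.univ.filter (fun m => c m = -1) then (-1:ℂ) else 1 := by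
    intro m
    rcases hc m with h | h <;> simp [h] <;> norm_num
  rw [Finset.prod_congr rfl (fun m _ => h1 m), Finset.prod_ite_mem, Finset.univ_inter,
    Finset.prod_const]

lemma diag_mem (H : Subgroup (GL (Fin 6) ℂ))
    (hflp : ∀ j k : Fin 6, j ≠ k →
      ∃ d ∈ H, (d : Matrix (Fin 6) (Fin 6) ℂ) = Matrix.diagonal (flp j k)) :
    ∀ (n : ℕ) (c : Fin 6 → ℂ), signs c → (∏ m, c m) = 1 →
      (Finset.univ.filter (fun m => c m = -1)).card = n →
      ∀ d : GL (Fin 6) ℂ, (d : Matrix (Fin 6) (Fin 6) ℂ) = Matrix.diagonal c → d ∈ H := by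
  classical
  intro n
  induction n using Nat.strong_induction_on with
  | _ n ih =>
    intro c hc hpc hcard d hd
    rcases Nat.eq_zero_or_pos n with rfl | hn
    · have hS : Finset.univ.filter (fun m => c m = -1) = ∅ := Finset.card_eq_zero.mp hcard
      have hone : ∀ m, c m = 1 := by
        intro m
        rcases hc m with h | h
        · exact h
        · exfalso
          have hm : m ∈ Finset.univ.filter (fun m => c m = -1) := by simp [h]
          rw [hS] at hm
          simp at hm
      have hd1 : d = 1 := by
        apply Units.ext
        rw [hd, Units.val_one]
        have : c = fun _ => 1 := funext hone
        rw [this, diagonal_eq_sp, sp_one_one]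
      rw [hd1]; exact H.one_mem
    · have hpow : (-1:ℂ) ^ n = 1 := by rw [← hcard, ← prod_signs_eq c hc, hpc]
      have heven : Even n := by
        by_contra hodd
        rw [Nat.not_even_iff_odd] at hodd
        rw [hodd.neg_one_pow] at hpow
        norm_num at hpow
      have hcard2 : 1 < (Finset.univ.filter (fun m => c m = -1)).card := by
        rw [hcard]; rcases heven with ⟨r, hr⟩; omega
      obtain ⟨j, hj, k, hk, hjk⟩ := Finset.one_lt_card.mp hcard2
      have hcj : c j = -1 := by simpa using hj
      have hck : c k = -1 := by simpa using hk
      obtain ⟨x, hxH, hx⟩ := hflp j k hjk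
      set c' : Fin 6 → ℂ := fun m => c m * flp j k m with hc'
      have hd' : ((d * x : GL (Fin 6) ℂ) : Matrix (Fin 6) (Fin 6) ℂ)
          = Matrix.diagonal c' := by
        rw [Units.val_mul, hd, hx, Matrix.diagonal_mul_diagonal]
      have hcs' : signs c' := by
        intro m
        rcases hc m with h1 | h1 <;> rcases flp_signs j k m with h2 | h2 <;>
          simp [hc', h1, h2]
      have hpc' : ∏ m, c' m = 1 := by
        rw [hc', Finset.prod_mul_distrib, hpc, flp_prod hjk, one_mul]
      have hfilter : Finset.univ.filter (fun m => c' m = -1)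
          = ((Finset.univ.filter (fun m => c m = -1)).erase j).erase k := by
        ext m
        simp only [Finset.mem_filter, Finset.mem_univ, true_and, Finset.mem_erase]
        rcases eq_or_ne m j with rfl | h1
        · simp only [hc', flp, hcj]
          norm_num
        rcases eq_or_ne m k with rfl | h2
        · simp only [hc', flp, hck]
          norm_num
        · have : flp j k m = 1 := by simp [flp, h1, h2]
          simp [hc', this, h1, h2]
      have hkmem : k ∈ (Finset.univ.filter (fun m => c m = -1)).erase j :=
        Finset.mem_erase.mpr ⟨hjk.symm, hk⟩
      have hcard' : (Finset.univ.filter (fun m => c' m = -1)).card = n - 2 := by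
        rw [hfilter, Finset.card_erase_of_mem hkmem, Finset.card_erase_of_mem hj, hcard]
        omega
      have hmem' : d * x ∈ H := by
        refine ih (n - 2) (by omega) c' hcs' hpc' hcard' (d * x) hd'
      have : d = d * x * x⁻¹ := by group
      rw [this]
      exact H.mul_mem hmem' (H.inv_mem hxH)

/-- If `H` is a normal subgroup of the type `D₆` Weyl group `W₆'` whose image under
the projection `π` to `S₆` is all of `S₆`, then `H = W₆'`. -/
theorem stmt_6 (H : Subgroup (GL (Fin 6) ℂ)) (hle : H ≤ W6'Sub)
    (hnorm : ∀ g ∈ W6'Sub, ∀ h ∈ H, g * h * g⁻¹ ∈ H)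
    (hsurj : ∀ σ : Equiv.Perm (Fin 6), ∃ h ∈ H, ∃ a : Fin 6 → ℂ,
      (h : Matrix (Fin 6) (Fin 6) ℂ) = sp σ a) :
    H = W6'Sub := by
  refine le_antisymm hle ?_
  have hflp := flp_mem H hle hnorm hsurj
  show Subgroup.closure W6'Set ≤ H
  rw [Subgroup.closure_le]
  rintro g ⟨σ, a, ha, hpa, hga⟩
  obtain ⟨h, hH, b', hhb'⟩ := hsurj σ
  obtain ⟨σ', b, hbs, hpb, hhb⟩ := (mem_W6'Sub_iff h).mp (hle hH)
  obtain ⟨hστ, hbb⟩ := sp_inj (signs_ne_zero hbs) (hhb'.symm.trans hhb)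
  rw [← hστ] at hhb
  have hhinv : ((h⁻¹ : GL (Fin 6) ℂ) : Matrix (Fin 6) (Fin 6) ℂ)
      = sp σ⁻¹ (fun m => b (σ⁻¹ m)) := coe_inv_sp h σ b hbs hhb
  set c : Fin 6 → ℂ := fun m => a (σ⁻¹ m) * b (σ⁻¹ m) with hc
  have hcs : signs c := by
    intro m
    rcases ha (σ⁻¹ m) with h1 | h1 <;> rcases hbs (σ⁻¹ m) with h2 | h2 <;>
      simp only [hc, h1, h2] <;> norm_num
  have hpc : ∏ m, c m = 1 := by
    rw [hc]
    rw [Finset.prod_mul_distrib, Equiv.prod_comp σ⁻¹ a, Equiv.prod_comp σ⁻¹ b, hpa, hpb, one_mul]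
  have hgh : ((g * h⁻¹ : GL (Fin 6) ℂ) : Matrix (Fin 6) (Fin 6) ℂ) = Matrix.diagonal c := by
    rw [Units.val_mul, hga, hhinv, sp_mul, diagonal_eq_sp, mul_inv_cancel]
  have hmem : g * h⁻¹ ∈ H :=
    diag_mem H hflp _ c hcs hpc rfl (g * h⁻¹) hgh
  have hfin : g = g * h⁻¹ * h := by group
  rw [hfin]
  exact H.mul_mem hmem hH
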